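/- arXiv:1711.11416 — 4 statements merged into one kernel-verified Lean document; each statement's English description precedes it below -/
import Mathlib

section
/- Let a > 2 be real and define R(z) = e^{−iz}/(z − ia) + 1. Then the index of R along the real line vanishes: lim_{N→∞} ∫_{−N}^{N} R'(k)/R(k) dk = 0, where the integrals are over real k and R' is the complex derivative of R. Moreover Log(R(k)) → 0 as k → +∞ and as k → −∞ along the real axis, where Log is the principal branch of the complex logarithm. -/
open Complex Filter

noncomputable def Rf (a : ℝ) : ℂ → ℂ :=
  fun z => Complex.exp (-Complex.I * z) / (z - Complex.I * a) + 1

noncomputable def Rd (a : ℝ) : ℂ → ℂ := fun z =>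
  (Complex.exp (-Complex.I * z) * (-Complex.I) * (z - Complex.I * a) -
    Complex.exp (-Complex.I * z) * 1) / (z - Complex.I * a) ^ 2

lemma ne_ia (a : ℝ) (ha : 2 < a) (k : ℝ) : (k : ℂ) - Complex.I * a ≠ 0 := by
  intro h
  have := congrArg Complex.im h
  simp at this
  linarith

lemma hasDerivAt_Rf (a : ℝ) (ha : 2 < a) (k : ℝ) :
    HasDerivAt (Rf a) (Rd a k) (k : ℂ) := by
  have h1 : HasDerivAt (fun z : ℂ => Complex.exp (-Complex.I * z))
      (Complex.exp (-Complex.I * (k:ℂ)) * (-Complex.I)) (k:ℂ) := by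
    have := ((hasDerivAt_id (k:ℂ)).const_mul (-Complex.I)).cexp
    simpa [mul_comm] using this
  have h2 : HasDerivAt (fun z : ℂ => z - Complex.I * a) 1 (k:ℂ) :=
    (hasDerivAt_id _).sub_const _
  exact ((h1.div h2 (ne_ia a ha k)).add_const 1)

lemma re_pos (a : ℝ) (ha : 2 < a) (k : ℝ) : 0 < (Rf a k).re := by
  have habs : ‖(Complex.exp (-Complex.I * k) / ((k:ℂ) - Complex.I * a))‖ ≤ 1 / a := by
    rw [norm_div]
    have h1 : ‖(Complex.exp (-Complex.I * k))‖ = 1 := by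
      rw [Complex.norm_exp]; simp
    rw [h1]
    apply div_le_div_of_nonneg_left (by norm_num) (by linarith)
    calc a = |(((k:ℂ) - Complex.I * a).im)| := by simp [abs_of_pos (by linarith : (0:ℝ) < a)]
      _ ≤ ‖((k:ℂ) - Complex.I * a)‖ := Complex.abs_im_le_norm _
  have hre : -(1/a) ≤ (Complex.exp (-Complex.I * k) / ((k:ℂ) - Complex.I * a)).re := by
    have := Complex.abs_re_le_norm (Complex.exp (-Complex.I * k) / ((k:ℂ) - Complex.I * a))
    have := abs_le.mp (this.trans habs) |>.1
    linarith [this]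
  have h1a : (1:ℝ)/a < 1 := by
    rw [div_lt_one (by linarith)]; linarith
  simp only [Rf, Complex.add_re, Complex.one_re]
  linarith

lemma Rf_ne (a : ℝ) (ha : 2 < a) (k : ℝ) : Rf a k ≠ 0 := by
  intro h
  have := re_pos a ha k
  rw [h] at this; simp at this

lemma hasDerivAt_logRf (a : ℝ) (ha : 2 < a) (k : ℝ) :
    HasDerivAt (fun t : ℝ => Complex.log (Rf a t)) (Rd a k / Rf a k) k := by
  have h := (hasDerivAt_Rf a ha k).comp_ofReal
  exact h.clog_real (Or.inl (re_pos a ha k))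

lemma norm_Rf_sub_one (a : ℝ) (k : ℝ) :
    ‖Rf a k - 1‖ = (‖((k:ℂ) - Complex.I * a)‖)⁻¹ := by
  simp only [Rf, add_sub_cancel_right]
  rw [norm_div, Complex.norm_exp]
  simp

lemma tendsto_Rf (a : ℝ) (l : Filter ℝ)
    (hl : Tendsto (fun k : ℝ => |k|) l atTop) :
    Tendsto (fun k : ℝ => Rf a k) l (nhds 1) := by
  rw [tendsto_iff_norm_sub_tendsto_zero]
  have hb : Tendsto (fun k : ℝ => ‖((k:ℂ) - Complex.I * a)‖) l atTop := by
    apply tendsto_atTop_mono _ hl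
    intro k
    calc |k| = |(((k:ℂ) - Complex.I * a).re)| := by simp
      _ ≤ ‖((k:ℂ) - Complex.I * a)‖ := Complex.abs_re_le_norm _
  refine hb.inv_tendsto_atTop.congr fun k => ?_
  rw [norm_Rf_sub_one]; rfl

lemma tendsto_logRf (a : ℝ) (l : Filter ℝ)
    (hl : Tendsto (fun k : ℝ => |k|) l atTop) :
    Tendsto (fun k : ℝ => Complex.log (Rf a k)) l (nhds 0) := by
  have hc : ContinuousAt Complex.log 1 :=
    continuousAt_clog (by simp [Complex.slitPlane])
  have := hc.tendsto.comp (tendsto_Rf a l hl)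
  simpa [Function.comp_def] using this

lemma cont_Rd (a : ℝ) (ha : 2 < a) :
    Continuous fun k : ℝ => Rd a k := by
  apply Continuous.div
  · fun_prop
  · fun_prop
  · intro k
    exact pow_ne_zero _ (ne_ia a ha k)

lemma cont_Rf (a : ℝ) (ha : 2 < a) :
    Continuous fun k : ℝ => Rf a k := by
  apply Continuous.add _ continuous_const
  apply Continuous.div
  · fun_prop
  · fun_prop
  · intro k
    exact ne_ia a ha k

/-- For `a > 2` and `R(z) = e^{−iz}/(z − ia) + 1`, the index of `R` along the real
line vanishes: `∫_{−N}^{N} R'(k)/R(k) dk → 0` as `N → ∞`; moreover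
`Log (R k) → 0` as `k → ±∞` along the real axis. -/
theorem index_R_eq_zero (a : ℝ) (ha : 2 < a) :
    Tendsto (fun N : ℝ => ∫ k : ℝ in (-N)..N,
        deriv (fun z : ℂ => Complex.exp (-Complex.I * z) / (z - Complex.I * a) + 1) k /
          (Complex.exp (-Complex.I * k) / ((k : ℂ) - Complex.I * a) + 1))
      atTop (nhds 0) ∧
    Tendsto (fun k : ℝ =>
        Complex.log (Complex.exp (-Complex.I * k) / ((k : ℂ) - Complex.I * a) + 1))
      atTop (nhds 0) ∧
    Tendsto (fun k : ℝ =>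
        Complex.log (Complex.exp (-Complex.I * k) / ((k : ℂ) - Complex.I * a) + 1))
      atBot (nhds 0) := by
  have hderiv : ∀ k : ℝ,
      deriv (fun z : ℂ => Complex.exp (-Complex.I * z) / (z - Complex.I * a) + 1) (k:ℂ)
        = Rd a k := fun k => (hasDerivAt_Rf a ha k).deriv
  have hTop : Tendsto (fun k : ℝ => Complex.log (Rf a k)) atTop (nhds 0) :=
    tendsto_logRf a atTop (tendsto_abs_atTop_atTop)
  have hBot : Tendsto (fun k : ℝ => Complex.log (Rf a k)) atBot (nhds 0) :=
    tendsto_logRf a atBot (tendsto_abs_atBot_atTop)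
  refine ⟨?_, hTop, hBot⟩
  have key : ∀ N : ℝ,
      (∫ k : ℝ in (-N)..N,
        deriv (fun z : ℂ => Complex.exp (-Complex.I * z) / (z - Complex.I * a) + 1) k /
          (Complex.exp (-Complex.I * k) / ((k : ℂ) - Complex.I * a) + 1))
        = Complex.log (Rf a ↑N) - Complex.log (Rf a ↑(-N)) := by
    intro N
    apply intervalIntegral.integral_eq_sub_of_hasDerivAt
    · intro x _
      have := hasDerivAt_logRf a ha x
      rw [show (Complex.exp (-Complex.I * x) / ((x : ℂ) - Complex.I * a) + 1) = Rf a x from rfl,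
        hderiv x]
      exact this
    · apply Continuous.intervalIntegrable
      have : (fun k : ℝ =>
          deriv (fun z : ℂ => Complex.exp (-Complex.I * z) / (z - Complex.I * a) + 1) k /
            (Complex.exp (-Complex.I * k) / ((k : ℂ) - Complex.I * a) + 1))
          = fun k : ℝ => Rd a k / Rf a k := by
        funext k
        rw [hderiv k]; rfl
      rw [this]
      exact (cont_Rd a ha).div (cont_Rf a ha) (fun k => Rf_ne a ha k)
  have := hTop.sub (hBot.comp tendsto_neg_atTop_atBot)
  rw [sub_zero] at this
  refine this.congr fun N => ?_
  rw [key N]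
  simp [Function.comp]
end

section
/- Let a > 2 be real and define R(z) = e^{−iz}/(z − ia) + 1. Then there exist N ∈ ℕ and a sequence (t_n)_{n≥N} of complex numbers such that R(t_n) = 0 for every n ≥ N and t_n − (2πn + π + i·log(2πn)) → 0 as n → ∞; that is, R has a sequence of zeros t_n = 2πn + φ_n + iβ_n with φ_n = π + o(1) and β_n = log(2πn) + o(1). -/
open Complex Real Filter Topology

/-- `Complex.log` is `1/2`-Lipschitz on the half-plane `2 ≤ re`. -/
lemma lip_clog_aux {z w : ℂ} (hz : 2 ≤ z.re) (hw : 2 ≤ w.re) :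
    ‖Complex.log z - Complex.log w‖ ≤ (1/2) * ‖z - w‖ := by
  have hconv : Convex ℝ {c : ℂ | (2:ℝ) ≤ c.re} := convex_halfSpace_re_ge 2
  refine hconv.norm_image_sub_le_of_norm_hasDerivWithin_le
    (f := Complex.log) (f' := fun x => x⁻¹) (C := 1/2) ?_ ?_ hw hz
  · intro x hx
    exact (Complex.hasDerivAt_log (Or.inl (by simp at hx; linarith))).hasDerivWithinAt
  · intro x hx
    simp only [Set.mem_setOf_eq] at hx
    have h2 : (2:ℝ) ≤ ‖x‖ := le_trans hx ((Complex.re_le_norm x).trans_eq rfl)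
    rw [norm_inv]
    rw [inv_le_comm₀ (by linarith) (by norm_num)]
    linarith

/-- Banach fixed point on a closed ball, with contraction constant `1/2`. -/
lemma exists_fixedPt_ball {F : ℂ → ℂ} {c : ℂ} {r : ℝ} (hr : 0 ≤ r)
    (hmaps : Set.MapsTo F (Metric.closedBall c r) (Metric.closedBall c r))
    (hlip : ∀ x ∈ Metric.closedBall c r, ∀ y ∈ Metric.closedBall c r,
      dist (F x) (F y) ≤ (1/2) * dist x y) :
    ∃ t ∈ Metric.closedBall c r, F t = t := by
  have hc : IsComplete (Metric.closedBall c r) :=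
    Metric.isClosed_closedBall.isComplete
  have hK : LipschitzOnWith (1/2 : NNReal) F (Metric.closedBall c r) := by
    rw [lipschitzOnWith_iff_dist_le_mul]
    intro x hx y hy
    have := hlip x hx y hy
    calc dist (F x) (F y) ≤ (1/2) * dist x y := this
    _ = ((1/2 : NNReal) : ℝ) * dist x y := by norm_num
  have hcontr : ContractingWith (1/2 : NNReal) (hmaps.restrict F _ _) :=
    ⟨by rw [← NNReal.coe_lt_coe]; norm_num, hK.mapsToRestrict hmaps⟩
  obtain ⟨y, hy, hfix, -⟩ := hcontr.exists_fixedPoint' hc hmaps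
    (Metric.mem_closedBall_self hr) (edist_ne_top _ _)
  exact ⟨y, hy, hfix⟩

set_option maxHeartbeats 1600000 in
/-- For `a > 2`, `R(z) = e^{−iz}/(z − ia) + 1` has a sequence of zeros
`t_n = 2πn + π + i log(2πn) + o(1)`. -/
theorem R_has_zero_sequence (a : ℝ) (ha : 2 < a) :
    ∃ (N : ℕ) (t : ℕ → ℂ),
      (∀ n : ℕ, N ≤ n →
        Complex.exp (-Complex.I * t n) / (t n - Complex.I * a) + 1 = 0) ∧
      Tendsto (fun n : ℕ =>
          t n - (((2 * π * n + π : ℝ) : ℂ) + Complex.I * (Real.log (2 * π * n) : ℂ)))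
        atTop (nhds 0) := by
  classical
  set c : ℕ → ℂ := fun n =>
    ((2 * π * n + π : ℝ) : ℂ) + Complex.I * (Real.log (2 * π * n) : ℂ) with hc
  set F : ℕ → ℂ → ℂ := fun n t =>
    ((2 * π * n + π : ℝ) : ℂ) + Complex.I * Complex.log (t - Complex.I * a) with hFdef
  set δ : ℕ → ℝ := fun n => ‖F n (c n) - c n‖ with hδdef
  have hδnonneg : ∀ n, 0 ≤ δ n := fun n => norm_nonneg _
  -- the function n ↦ 2πn tends to infinity
  have hu : Tendsto (fun n : ℕ => 2 * π * (n:ℝ)) atTop atTop := by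
    apply Tendsto.const_mul_atTop (by positivity : (0:ℝ) < 2 * π)
    exact tendsto_natCast_atTop_atTop
  -- δ → 0
  have hδ0 : Tendsto δ atTop (𝓝 0) := by
    -- w n → 1
    set w : ℕ → ℂ := fun n => (((2*π*n + π)/(2*π*n) : ℝ) : ℂ)
      + Complex.I * (((Real.log (2*π*n) - a)/(2*π*n) : ℝ) : ℂ) with hwdef
    have hw1 : Tendsto w atTop (𝓝 1) := by
      have hA : Tendsto (fun n : ℕ => ((2*π*n + π)/(2*π*n) : ℝ)) atTop (𝓝 1) := by
        have h1 : Tendsto (fun n : ℕ => (1 : ℝ) + π/(2*π*n)) atTop (𝓝 (1 + 0)) :=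
          tendsto_const_nhds.add (Tendsto.div_atTop tendsto_const_nhds hu)
        rw [add_zero] at h1
        apply h1.congr'
        filter_upwards [eventually_ge_atTop 1] with n hn
        have hne : (2*π*(n:ℝ)) ≠ 0 := by
          have : (1:ℝ) ≤ n := by exact_mod_cast hn
          positivity
        field_simp
      have hB : Tendsto (fun n : ℕ => ((Real.log (2*π*n) - a)/(2*π*n) : ℝ)) atTop (𝓝 0) := by
        have h1 : Tendsto (fun x : ℝ => Real.log x / x) atTop (𝓝 0) :=
          Real.isLittleO_log_id_atTop.tendsto_div_nhds_zero
        have h2 : Tendsto (fun n : ℕ => Real.log (2*π*n) / (2*π*n)) atTop (𝓝 0) :=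
          h1.comp hu
        have h3 : Tendsto (fun n : ℕ => a / (2*π*(n:ℝ))) atTop (𝓝 0) :=
          Tendsto.div_atTop tendsto_const_nhds hu
        have := h2.sub h3
        rw [sub_zero] at this
        apply this.congr
        intro n
        rw [sub_div]
      have hAc : Tendsto (fun n : ℕ => (((2*π*n + π)/(2*π*n) : ℝ) : ℂ)) atTop (𝓝 1) := by
        have := (Complex.continuous_ofReal.tendsto 1).comp hA
        simpa only [Function.comp_def, Complex.ofReal_one] using this
      have hBc : Tendsto (fun n : ℕ => (((Real.log (2*π*n) - a)/(2*π*n) : ℝ) : ℂ)) atTop (𝓝 0) := by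
        have := (Complex.continuous_ofReal.tendsto 0).comp hB
        simpa only [Function.comp_def, Complex.ofReal_zero] using this
      have := hAc.add ((tendsto_const_nhds (x := Complex.I)).mul hBc)
      rw [mul_zero, add_zero] at this
      exact this
    -- log (w n) → 0
    have hlogw : Tendsto (fun n => Complex.log (w n)) atTop (𝓝 0) := by
      have h1 : ContinuousAt Complex.log 1 :=
        continuousAt_clog (by simp [Complex.mem_slitPlane_iff])
      have := h1.tendsto.comp hw1
      simpa [Complex.log_one, Function.comp_def] using this
    have hnorm : Tendsto (fun n => ‖Complex.log (w n)‖) atTop (𝓝 0) := by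
      have := hlogw.norm
      simpa using this
    apply hnorm.congr'
    filter_upwards [eventually_ge_atTop 1] with n hn
    have hnpos : (0:ℝ) < 2*π*n := by
      have : (1:ℝ) ≤ n := by exact_mod_cast hn
      positivity
    have hcsub : c n - Complex.I * a ≠ 0 := by
      intro h
      have := congrArg Complex.re h
      simp [hc, Real.pi_pos.le] at this
      nlinarith [Real.pi_pos]
    have hkey : c n - Complex.I * a = ((2*π*n : ℝ) : ℂ) * w n := by
      have hπc : (π:ℂ) ≠ 0 := by exact_mod_cast Real.pi_ne_zero
      have hnc : ((n:ℕ):ℂ) ≠ 0 := by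
        have : n ≠ 0 := by omega
        exact_mod_cast this
      rw [hwdef, hc]
      push_cast
      field_simp
      ring
    have hwne : w n ≠ 0 := by
      intro h
      apply hcsub
      rw [hkey, h, mul_zero]
    have hlogeq : Complex.log (c n - Complex.I * a)
        = (Real.log (2*π*n) : ℂ) + Complex.log (w n) := by
      rw [hkey, Complex.log_ofReal_mul hnpos hwne]
    have : F n (c n) - c n = Complex.I * (Complex.log (c n - Complex.I * a)
        - (Real.log (2*π*n) : ℂ)) := by
      rw [hFdef, hc]; ring
    rw [hδdef]
    simp only []
    rw [this, hlogeq]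
    rw [norm_mul, Complex.norm_I, one_mul]
    ring_nf
  -- choose N
  obtain ⟨N₀, hN₀⟩ := (Metric.tendsto_atTop.mp hδ0 1 (by norm_num) : ∃ N, ∀ n ≥ N, dist (δ n) 0 < 1)
  set N := max N₀ 1 with hN
  have hδle : ∀ n, N ≤ n → δ n ≤ 1 := by
    intro n hn
    have := hN₀ n (le_trans (le_max_left _ _) hn)
    rw [Real.dist_eq, sub_zero] at this
    exact le_of_lt (lt_of_abs_lt this)
  have hNn1 : ∀ n, N ≤ n → (1:ℝ) ≤ n := by
    intro n hn
    exact_mod_cast le_trans (le_max_right _ _) hn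
  -- real part bound on the ball
  have hre : ∀ n, N ≤ n → ∀ t ∈ Metric.closedBall (c n) (2 * δ n),
      2 ≤ (t - Complex.I * a).re := by
    intro n hn t ht
    rw [Metric.mem_closedBall, dist_eq_norm] at ht
    have h1 : |t.re - (c n).re| ≤ ‖t - c n‖ := by
      have := Complex.abs_re_le_norm (t - c n)
      simpa using this
    have hcre : (c n).re = 2*π*n + π := by simp [hc]
    have hn1 := hNn1 n hn
    have hδ1 := hδle n hn
    have hπ := Real.pi_gt_three
    have : t.re ≥ 2*π*n + π - 2 := by
      rw [hcre] at h1
      have := abs_le.mp h1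
      linarith
    have him : (Complex.I * (a:ℂ)).re = 0 := by simp
    rw [Complex.sub_re, him, sub_zero]
    nlinarith
  -- fixed points exist
  have hfix : ∀ n, N ≤ n → ∃ t ∈ Metric.closedBall (c n) (2 * δ n), F n t = t := by
    intro n hn
    apply exists_fixedPt_ball (by linarith [hδnonneg n])
    · -- maps to
      intro t ht
      have hcball : c n ∈ Metric.closedBall (c n) (2 * δ n) :=
        Metric.mem_closedBall_self (by linarith [hδnonneg n])
      have hret := hre n hn t ht
      have hrec := hre n hn (c n) hcball
      have hlip : ‖F n t - F n (c n)‖ ≤ (1/2) * ‖t - c n‖ := by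
        have h1 : F n t - F n (c n) = Complex.I *
            (Complex.log (t - Complex.I * a) - Complex.log (c n - Complex.I * a)) := by
          rw [hFdef]; ring
        rw [h1, norm_mul, Complex.norm_I, one_mul]
        have := lip_clog_aux hret hrec
        calc ‖Complex.log (t - Complex.I*a) - Complex.log (c n - Complex.I*a)‖
            ≤ (1/2) * ‖(t - Complex.I*a) - (c n - Complex.I*a)‖ := this
          _ = (1/2) * ‖t - c n‖ := by ring_nf
      rw [Metric.mem_closedBall, dist_eq_norm] at ht ⊢
      calc ‖F n t - c n‖ ≤ ‖F n t - F n (c n)‖ + ‖F n (c n) - c n‖ := by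
            have := norm_sub_le_norm_sub_add_norm_sub (F n t) (F n (c n)) (c n)
            exact this
        _ ≤ (1/2) * ‖t - c n‖ + δ n := by
            apply add_le_add hlip
            rw [hδdef]
        _ ≤ (1/2) * (2 * δ n) + δ n := by
            apply add_le_add_left
            apply mul_le_mul_of_nonneg_left ht (by norm_num)
        _ = 2 * δ n := by ring
    · -- Lipschitz
      intro x hx y hy
      have hrex := hre n hn x hx
      have hrey := hre n hn y hy
      have h1 : F n x - F n y = Complex.I *
          (Complex.log (x - Complex.I * a) - Complex.log (y - Complex.I * a)) := by
        rw [hFdef]; ring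
      rw [dist_eq_norm, dist_eq_norm, h1, norm_mul, Complex.norm_I, one_mul]
      have := lip_clog_aux hrex hrey
      calc ‖Complex.log (x - Complex.I*a) - Complex.log (y - Complex.I*a)‖
          ≤ (1/2) * ‖(x - Complex.I*a) - (y - Complex.I*a)‖ := this
        _ = (1/2) * ‖x - y‖ := by ring_nf
  choose! t htball htfix using hfix
  refine ⟨N, t, ?_, ?_⟩
  · -- zeros
    intro n hn
    have hball := htball n hn
    have hfx := htfix n hn
    have hret := hre n hn (t n) hball
    have htne : t n - Complex.I * a ≠ 0 := by
      intro h
      rw [h] at hret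
      norm_num at hret
    -- exp(-I (2πn+π)) = -1
    have hexp1 : Complex.exp (-Complex.I * ((2*π*n + π : ℝ) : ℂ)) = -1 := by
      have h1 : Complex.exp (((-(n:ℤ)) : ℂ) * (2*(π:ℝ)*Complex.I)) = 1 := by
        exact_mod_cast Complex.exp_int_mul_two_pi_mul_I (-(n:ℤ))
      have h2 : Complex.exp (-(π*Complex.I)) = -1 := by
        rw [Complex.exp_neg, Complex.exp_pi_mul_I]
        norm_num
      have heq : -Complex.I * ((2*π*n + π : ℝ) : ℂ)
          = ((-(n:ℤ)) : ℂ) * (2*(π:ℝ)*Complex.I) + -(π*Complex.I) := by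
        push_cast
        ring
      rw [heq, Complex.exp_add, h1, h2, one_mul]
    have hexp : Complex.exp (-Complex.I * t n) = -(t n - Complex.I * a) := by
      conv_lhs => rw [← hfx]
      have heq : -Complex.I * F n (t n)
          = -Complex.I * ((2*π*n + π : ℝ) : ℂ) + Complex.log (t n - Complex.I * a) := by
        rw [hFdef]
        simp only []
        have : Complex.I * Complex.I = -1 := Complex.I_mul_I
        ring_nf
        rw [Complex.I_sq]
        ring
      rw [heq, Complex.exp_add, hexp1, Complex.exp_log htne]
      ring
    rw [hexp, neg_div, div_self htne]
    ring
  · -- convergence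
    have hbound : ∀ᶠ n in atTop, ‖t n - c n‖ ≤ 2 * δ n := by
      filter_upwards [eventually_ge_atTop N] with n hn
      have := htball n hn
      rwa [Metric.mem_closedBall, dist_eq_norm] at this
    have h2δ : Tendsto (fun n => 2 * δ n) atTop (𝓝 0) := by
      have := hδ0.const_mul 2
      simpa using this
    exact squeeze_zero_norm' hbound h2δ
end

section
/- Let a > 2 be real, R(t) = e^{−it}/(t − ia) + 1, and let Log denote the principal branch of the complex logarithm. Then for every complex z with Im(z) > 0, the function t ↦ Log(R(t))/(t − z) is integrable on ℝ and ∫_ℝ Log(R(t))/(t − z) dt = 0. -/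
open Complex MeasureTheory

noncomputable def gA (a : ℝ) (z w : ℂ) : ℂ :=
  Complex.log (Complex.exp (-Complex.I * w) / (w - Complex.I * a) + 1) / (w - z)

lemma gA_den_ge {a : ℝ} (ha : 0 ≤ a) {w : ℂ} (hw : w.im ≤ 0) :
    a ≤ ‖w - Complex.I * a‖ := by
  have h := Complex.abs_im_le_norm (w - Complex.I * a)
  have him : (w - Complex.I * a).im = w.im - a := by simp
  rw [him] at h
  have habs : |w.im - a| = a - w.im := by rw [abs_of_nonpos (by linarith)]; ring
  linarith [habs ▸ h]

lemma gA_den_ge' {a : ℝ} (ha : 0 ≤ a) {w : ℂ} (hw : w.im ≤ 0) :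
    ‖w‖ ≤ ‖w - Complex.I * a‖ := by
  rw [Complex.norm_def, Complex.norm_def]
  apply Real.sqrt_le_sqrt
  simp only [Complex.normSq_apply, Complex.sub_re, Complex.sub_im, Complex.mul_re,
    Complex.mul_im, Complex.I_re, Complex.I_im, Complex.ofReal_re, Complex.ofReal_im]
  nlinarith [mul_nonneg ha (neg_nonneg.mpr hw)]

lemma gA_norm_f_le {a : ℝ} (ha : 2 < a) {w : ℂ} (hw : w.im ≤ 0) :
    ‖Complex.exp (-Complex.I * w) / (w - Complex.I * a)‖ ≤ 1 / ‖w - Complex.I * a‖ := by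
  have hD : 0 < ‖w - Complex.I * a‖ := lt_of_lt_of_le (by linarith) (gA_den_ge (by linarith) hw)
  rw [norm_div]
  gcongr
  rw [Complex.norm_exp]
  have : (-Complex.I * w).re = w.im := by simp
  rw [this]
  exact Real.exp_le_one_iff.mpr hw

lemma gA_f_half {a : ℝ} (ha : 2 < a) {w : ℂ} (hw : w.im ≤ 0) :
    ‖Complex.exp (-Complex.I * w) / (w - Complex.I * a)‖ ≤ 1 / 2 := by
  refine (gA_norm_f_le ha hw).trans ?_
  have h2 : (2:ℝ) ≤ ‖w - Complex.I * a‖ := le_trans (by linarith) (gA_den_ge (by linarith) hw)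
  exact one_div_le_one_div_of_le (by norm_num) h2

lemma gA_slit {a : ℝ} (ha : 2 < a) {w : ℂ} (hw : w.im ≤ 0) :
    Complex.exp (-Complex.I * w) / (w - Complex.I * a) + 1 ∈ Complex.slitPlane := by
  rw [add_comm]
  exact Complex.mem_slitPlane_of_norm_lt_one (lt_of_le_of_lt (gA_f_half ha hw) (by norm_num))

lemma gA_log_le {a : ℝ} (ha : 2 < a) {w : ℂ} (hw : w.im ≤ 0) :
    ‖Complex.log (Complex.exp (-Complex.I * w) / (w - Complex.I * a) + 1)‖ ≤
      2 / ‖w - Complex.I * a‖ := by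
  rw [add_comm]
  refine (Complex.norm_log_one_add_half_le_self (gA_f_half ha hw)).trans ?_
  have h := gA_norm_f_le ha hw
  have hD : 0 < ‖w - Complex.I * a‖ := lt_of_lt_of_le (by linarith) (gA_den_ge (by linarith) hw)
  rw [div_eq_mul_inv 2, ← one_div]
  nlinarith [norm_nonneg (Complex.exp (-Complex.I * w) / (w - Complex.I * a)),
    one_div_pos.mpr hD]

lemma gA_imz_le {z w : ℂ} (hz : 0 < z.im) (hw : w.im ≤ 0) : z.im ≤ ‖w - z‖ := by
  have h := Complex.abs_im_le_norm (w - z)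
  have him : (w - z).im = w.im - z.im := by simp
  rw [him] at h
  have habs : |w.im - z.im| = z.im - w.im := by rw [abs_of_nonpos (by linarith)]; ring
  linarith [habs ▸ h]

lemma gA_norm_le {a : ℝ} (ha : 2 < a) {z w : ℂ} (hz : 0 < z.im) (hw : w.im ≤ 0) :
    ‖gA a z w‖ ≤ 2 / (‖w - Complex.I * a‖ * ‖w - z‖) := by
  have hwz : (0:ℝ) < ‖w - z‖ := lt_of_lt_of_le hz (gA_imz_le hz hw)
  have hD : 0 < ‖w - Complex.I * a‖ := lt_of_lt_of_le (by linarith) (gA_den_ge (by linarith) hw)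
  rw [gA, norm_div, ← div_div]
  exact div_le_div_of_nonneg_right (gA_log_le ha hw) hwz.le

lemma gA_ne_z {z w : ℂ} (hz : 0 < z.im) (hw : w.im ≤ 0) : w - z ≠ 0 := by
  intro h
  have : (w - z).im = 0 := by rw [h]; simp
  simp at this
  linarith

lemma gA_ne_Ia {a : ℝ} (ha : 2 < a) {w : ℂ} (hw : w.im ≤ 0) : w - Complex.I * a ≠ 0 := by
  intro h
  have : (w - Complex.I * a).im = 0 := by rw [h]; simp
  simp at this
  linarith

lemma gA_diffAt {a : ℝ} (ha : 2 < a) {z w : ℂ} (hz : 0 < z.im) (hw : w.im < 0) :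
    DifferentiableAt ℂ (gA a z) w := by
  have h1 : DifferentiableAt ℂ
      (fun w => Complex.log (Complex.exp (-Complex.I * w) / (w - Complex.I * a) + 1)) w := by
    exact DifferentiableAt.clog
      (DifferentiableAt.add_const (c := 1)
        (((differentiableAt_id.const_mul (-Complex.I)).cexp).div
          (differentiableAt_id.sub (differentiableAt_const _)) (gA_ne_Ia ha hw.le)))
      (gA_slit ha hw.le)
  exact h1.div (differentiableAt_id.sub (differentiableAt_const z)) (gA_ne_z hz hw.le)

lemma gA_contAt {a : ℝ} (ha : 2 < a) {z w : ℂ} (hz : 0 < z.im) (hw : w.im ≤ 0) :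
    ContinuousAt (gA a z) w := by
  have h1 : ContinuousAt
      (fun w => Complex.log (Complex.exp (-Complex.I * w) / (w - Complex.I * a) + 1)) w := by
    exact ContinuousAt.clog
      (ContinuousAt.add
        (((continuous_const.mul continuous_id).cexp.continuousAt).div
          ((continuous_id.sub continuous_const).continuousAt) (gA_ne_Ia ha hw))
        continuousAt_const)
      (gA_slit ha hw)
  exact h1.div ((continuous_id.sub continuous_const).continuousAt) (gA_ne_z hz hw)


lemma gA_bound_far {a : ℝ} (ha : 2 < a) {z w : ℂ} (hz : 0 < z.im) (hw : w.im ≤ 0) {T : ℝ}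
    (hT : ‖z‖ + 1 ≤ T) (hwT : T ≤ ‖w‖) : ‖gA a z w‖ ≤ 2 / (T * (T - ‖z‖)) := by
  have hz0 : (0:ℝ) ≤ ‖z‖ := norm_nonneg z
  have h1 : ‖w‖ ≤ ‖w - Complex.I * a‖ := gA_den_ge' (by linarith) hw
  have h2 : ‖w‖ - ‖z‖ ≤ ‖w - z‖ := norm_sub_norm_le _ _
  refine (gA_norm_le ha hz hw).trans ?_
  apply div_le_div_of_nonneg_left (by norm_num) (by nlinarith)
  exact mul_le_mul (by linarith) (by linarith) (by linarith) (by linarith)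

set_option maxHeartbeats 2000000 in
/-- For `a > 2`, `R(t) = e^{−it}/(t − ia) + 1`, and `Im z > 0`, the function
`t ↦ Log(R t)/(t − z)` is integrable on `ℝ` and its integral vanishes. -/
theorem integral_log_R_upper (a : ℝ) (ha : 2 < a) (z : ℂ) (hz : 0 < z.im) :
    Integrable (fun t : ℝ =>
      Complex.log (Complex.exp (-Complex.I * t) / ((t : ℂ) - Complex.I * a) + 1) /
        ((t : ℂ) - z)) ∧
    (∫ t : ℝ,
      Complex.log (Complex.exp (-Complex.I * t) / ((t : ℂ) - Complex.I * a) + 1) /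
        ((t : ℂ) - z)) = 0 := by
  have hfun : (fun t : ℝ =>
      Complex.log (Complex.exp (-Complex.I * t) / ((t : ℂ) - Complex.I * a) + 1) /
        ((t : ℂ) - z)) = fun t : ℝ => gA a z t := rfl
  rw [hfun]
  have hcont : Continuous (fun t : ℝ => gA a z t) := by
    rw [continuous_iff_continuousAt]
    intro t
    exact (gA_contAt ha hz (by simp)).comp Complex.continuous_ofReal.continuousAt
  -- integrability
  have hInt : Integrable (fun t : ℝ => gA a z t) := by
    set M : ℝ := 2 * (‖z‖ + 1) with hM
    set C : ℝ := 2 / (a * z.im) * (1 + M ^ 2) + 8 with hC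
    have hq : 0 ≤ 2 / (a * z.im) * (1 + M ^ 2) := by positivity
    have hmaj : Integrable (fun t : ℝ => C * (1 / (1 + t ^ 2))) :=
      (integrable_inv_one_add_sq.const_mul C).congr
        (Filter.Eventually.of_forall fun t => by simp [one_div])
    refine hmaj.mono' hcont.aestronglyMeasurable (Filter.Eventually.of_forall fun t => ?_)
    have h0 := gA_norm_le ha hz (w := (t : ℂ)) (by simp)
    have hDa : a ≤ ‖(t : ℂ) - Complex.I * a‖ := gA_den_ge (by linarith) (by simp)
    have hDt : ‖(t : ℂ)‖ ≤ ‖(t : ℂ) - Complex.I * a‖ := gA_den_ge' (by linarith) (by simp)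
    have hzim : z.im ≤ ‖(t : ℂ) - z‖ := gA_imz_le hz (by simp)
    have htz : ‖(t : ℂ)‖ - ‖z‖ ≤ ‖(t : ℂ) - z‖ := norm_sub_norm_le _ _
    have hnt : ‖(t : ℂ)‖ = |t| := by
      rw [Complex.norm_real, Real.norm_eq_abs]
    rw [hnt] at hDt htz
    have hD1 : (0:ℝ) < ‖(t : ℂ) - Complex.I * a‖ := by linarith
    have hD2 : (0:ℝ) < ‖(t : ℂ) - z‖ := by linarith
    rcases le_or_gt |t| M with hcase | hcase
    · have h1 : ‖gA a z ↑t‖ ≤ 2 / (a * z.im) := by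
        refine h0.trans ?_
        apply div_le_div_of_nonneg_left (by norm_num) (by positivity)
        exact mul_le_mul hDa hzim hz.le hD1.le
      refine h1.trans ?_
      rw [mul_one_div, le_div_iff₀ (by positivity)]
      have ht2 : 1 + t ^ 2 ≤ 1 + M ^ 2 := by nlinarith [abs_nonneg t, _root_.sq_abs t]
      have hqq : 0 ≤ 2 / (a * z.im) := by positivity
      nlinarith [mul_le_mul_of_nonneg_left ht2 hqq]
    · have hMz : ‖z‖ + 1 ≤ |t| / 2 := by simp only [hM] at hcase; linarith
      have h1 : ‖gA a z ↑t‖ ≤ 2 / (|t| * (|t| / 2)) := by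
        refine h0.trans ?_
        have ht2' : (2:ℝ) ≤ |t| := by nlinarith [norm_nonneg z]
        apply div_le_div_of_nonneg_left (by norm_num) (by nlinarith)
        exact mul_le_mul (by linarith) (by linarith) (by linarith) hD1.le
      have ht0 : t ≠ 0 := by
        intro h; rw [h] at hcase; simp at hcase; nlinarith [norm_nonneg z]
      have h2 : 2 / (|t| * (|t| / 2)) = 4 / t ^ 2 := by
        have habs : |t| * (|t| / 2) = t ^ 2 / 2 := by rw [← _root_.sq_abs t]; ring
        rw [habs, div_div_eq_mul_div]; norm_num
      rw [h2] at h1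
      refine h1.trans ?_
      rw [mul_one_div, div_le_div_iff₀ (by positivity) (by positivity)]
      have ht4 : 4 ≤ t ^ 2 := by nlinarith [norm_nonneg z, _root_.sq_abs t]
      have hC8 : 8 ≤ C := by rw [hC]; linarith
      nlinarith [mul_le_mul_of_nonneg_right hC8 (sq_nonneg t)]
  refine ⟨hInt, ?_⟩
  have hF : Filter.Tendsto (fun T : ℝ => ∫ x in (-T)..T, gA a z x) Filter.atTop
      (nhds (∫ t : ℝ, gA a z t)) :=
    MeasureTheory.intervalIntegral_tendsto_integral hInt Filter.tendsto_neg_atTop_atBot Filter.tendsto_id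
  have hz0 : (0:ℝ) ≤ ‖z‖ := norm_nonneg z
  have hbound : ∀ T : ℝ, ‖z‖ + 1 ≤ T →
      ‖∫ x in (-T)..T, gA a z x‖ ≤ 8 / (T - ‖z‖) := by
    intro T hT
    have hT1 : (1:ℝ) ≤ T := by linarith
    have hle : (-T:ℝ) ≤ 0 := by linarith
    have key := Complex.integral_boundary_rect_eq_zero_of_continuousOn_of_differentiableOn
      (gA a z) ⟨-T, -T⟩ ⟨T, 0⟩ ?_ ?_
    rotate_left
    · intro w hw
      rw [Complex.mem_reProdIm] at hw
      have him : w.im ≤ 0 := by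
        have h2 := hw.2
        rw [Set.uIcc_of_le hle] at h2
        exact h2.2
      exact (gA_contAt ha hz him).continuousWithinAt
    · intro w hw
      rw [Complex.mem_reProdIm] at hw
      have him : w.im < 0 := by
        have h2 := hw.2
        have hmax : max (Complex.im ⟨-T, -T⟩) (Complex.im ⟨T, 0⟩) = 0 := by
          show max (-T) 0 = 0; exact max_eq_right hle
        rw [hmax] at h2
        exact h2.2
      exact (gA_diffAt ha hz him).differentiableWithinAt
    have key' : (∫ x in (-T)..T, gA a z (x + (-T : ℝ) * Complex.I)) -
        (∫ x in (-T)..T, gA a z (x + ((0:ℝ) : ℂ) * Complex.I)) +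
        Complex.I • (∫ y in (-T)..(0:ℝ), gA a z ((T : ℝ) + y * Complex.I)) -
        Complex.I • (∫ y in (-T)..(0:ℝ), gA a z ((-T : ℝ) + y * Complex.I)) = 0 := key
    simp only [Complex.ofReal_zero, zero_mul, add_zero, smul_eq_mul] at key'
    set E1 := ∫ x in (-T)..T, gA a z (x + (-T : ℝ) * Complex.I) with hE1
    set E3 := ∫ y in (-T)..(0:ℝ), gA a z ((T : ℝ) + y * Complex.I) with hE3
    set E4 := ∫ y in (-T)..(0:ℝ), gA a z ((-T : ℝ) + y * Complex.I) with hE4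
    have hFT : (∫ x in (-T)..T, gA a z x) = E1 + Complex.I * E3 - Complex.I * E4 := by
      linear_combination -key'
    set Cb : ℝ := 2 / (T * (T - ‖z‖)) with hCb
    have hCb0 : 0 ≤ Cb := by
      rw [hCb]
      apply le_of_lt (div_pos two_pos ?_)
      nlinarith
    have hB1 : ‖E1‖ ≤ Cb * (2 * T) := by
      have := intervalIntegral.norm_integral_le_of_norm_le_const (C := Cb)
        (f := fun x : ℝ => gA a z (x + (-T : ℝ) * Complex.I)) (a := -T) (b := T) ?_
      · calc ‖E1‖ ≤ Cb * |T - (-T)| := this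
          _ = Cb * (2 * T) := by rw [_root_.abs_of_nonneg (by linarith : (0:ℝ) ≤ T - -T)]; ring
      · intro x hx
        have him : ((x : ℂ) + (-T : ℝ) * Complex.I).im = -T := by simp
        apply gA_bound_far ha hz (by rw [him]; linarith) hT
        calc T = |((x:ℂ) + (-T : ℝ) * Complex.I).im| := by rw [him, _root_.abs_of_nonpos (by linarith : (-T:ℝ) ≤ 0)]; ring
          _ ≤ ‖(x:ℂ) + (-T : ℝ) * Complex.I‖ := by
              exact Complex.abs_im_le_norm _
    have hside : ∀ s : ℝ, |s| = T →
        ‖∫ y in (-T)..(0:ℝ), gA a z ((s : ℝ) + y * Complex.I)‖ ≤ Cb * T := by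
      intro s hs
      have := intervalIntegral.norm_integral_le_of_norm_le_const (C := Cb)
        (f := fun y : ℝ => gA a z ((s : ℝ) + y * Complex.I)) (a := -T) (b := 0) ?_
      · calc _ ≤ Cb * |0 - (-T)| := this
          _ = Cb * T := by rw [sub_neg_eq_add, zero_add, _root_.abs_of_nonneg (by linarith : (0:ℝ) ≤ T)]
      · intro y hy
        rw [Set.uIoc_of_le hle] at hy
        have him : ((s : ℂ) + y * Complex.I).im = y := by simp
        apply gA_bound_far ha hz (by rw [him]; exact hy.2) hT
        calc T = |((s:ℂ) + y * Complex.I).re| := by simp [hs.symm]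
          _ ≤ ‖(s:ℂ) + y * Complex.I‖ := by
              exact Complex.abs_re_le_norm _
    have hB3 : ‖E3‖ ≤ Cb * T := hside T (_root_.abs_of_nonneg (by linarith))
    have hB4 : ‖E4‖ ≤ Cb * T := hside (-T) (by rw [abs_neg, _root_.abs_of_nonneg (by linarith : (0:ℝ) ≤ T)])
    have hnorm : ‖∫ x in (-T)..T, gA a z x‖ ≤ Cb * (2 * T) + Cb * T + Cb * T := by
      rw [hFT]
      calc ‖E1 + Complex.I * E3 - Complex.I * E4‖
          ≤ ‖E1 + Complex.I * E3‖ + ‖Complex.I * E4‖ := norm_sub_le _ _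
        _ ≤ ‖E1‖ + ‖Complex.I * E3‖ + ‖Complex.I * E4‖ := by
            have := norm_add_le E1 (Complex.I * E3); linarith
        _ = ‖E1‖ + ‖E3‖ + ‖E4‖ := by
            rw [norm_mul, norm_mul, Complex.norm_I, one_mul, one_mul]
        _ ≤ Cb * (2 * T) + Cb * T + Cb * T := by linarith
    have hTne : T ≠ 0 := by linarith
    have hCbeq : Cb * (2 * T) + Cb * T + Cb * T = 8 / (T - ‖z‖) := by
      rw [hCb]
      have h1 : 2 / (T * (T - ‖z‖)) * (2 * T) + 2 / (T * (T - ‖z‖)) * T +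
          2 / (T * (T - ‖z‖)) * T = T * 8 / (T * (T - ‖z‖)) := by ring
      rw [h1, mul_div_mul_left _ _ hTne]
    exact hnorm.trans (le_of_eq hCbeq)
  have hlim : Filter.Tendsto (fun T : ℝ => 8 / (T - ‖z‖)) Filter.atTop (nhds 0) :=
    Filter.Tendsto.div_atTop tendsto_const_nhds
      (Filter.tendsto_atTop_add_const_right _ _ Filter.tendsto_id)
  have hFzero : Filter.Tendsto (fun T : ℝ => ∫ x in (-T)..T, gA a z x) Filter.atTop (nhds 0) :=
    squeeze_zero_norm' ((Filter.eventually_ge_atTop (‖z‖ + 1)).mono hbound) hlim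
  exact tendsto_nhds_unique hF hFzero
end

section
/- Let a > 2 be real, R(t) = e^{−it}/(t − ia) + 1, and let Log denote the principal branch of the complex logarithm. Then for every complex z with Im(z) < 0, the function t ↦ Log(R(t))/(t − z) is integrable on ℝ and (1/(2πi)) ∫_ℝ Log(R(t))/(t − z) dt = −Log(R(z)). -/
open Complex MeasureTheory Real

lemma ilrl_log_neg_of_im_neg (ζ : ℂ) (h : ζ.im < 0) :
    Complex.log (-ζ) = Complex.log ζ + π * Complex.I := by
  apply Complex.ext
  · simp [Complex.log_re]
  · simp [Complex.log_im, Complex.arg_neg_eq_arg_add_pi_of_im_neg h]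

lemma ilrl_log_neg_of_im_pos (ζ : ℂ) (h : 0 < ζ.im) :
    Complex.log (-ζ) = Complex.log ζ - π * Complex.I := by
  apply Complex.ext
  · simp [Complex.log_re]
  · simp [Complex.log_im, Complex.arg_neg_eq_arg_sub_pi_of_im_pos h]

theorem ilrl_horiz_ftc (p : ℂ) (c A B : ℝ) (s : ℂ)
    (hs : ∀ x ∈ Set.uIcc A B, s * ((x : ℂ) + c * Complex.I - p) ∈ Complex.slitPlane) :
    ∫ x in A..B, ((x : ℂ) + c * Complex.I - p)⁻¹ =
      Complex.log (s * ((B : ℂ) + c * Complex.I - p)) -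
        Complex.log (s * ((A : ℂ) + c * Complex.I - p)) := by
  have hne : ∀ x ∈ Set.uIcc A B, ((x : ℂ) + c * Complex.I - p) ≠ 0 := by
    intro x hx h0
    have := Complex.slitPlane_ne_zero (hs x hx)
    simp [h0] at this
  have hs0 : s ≠ 0 := by
    have := Complex.slitPlane_ne_zero (hs A Set.left_mem_uIcc)
    intro h; simp [h] at this
  have := intervalIntegral.integral_eq_sub_of_hasDerivAt
    (f := fun x : ℝ => Complex.log (s * ((x : ℂ) + c * Complex.I - p)))
    (f' := fun x : ℝ => ((x : ℂ) + c * Complex.I - p)⁻¹) (a := A) (b := B)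
    (fun x hx => ?_) ?_
  · exact this
  · have hre : HasDerivAt (fun t : ℝ => (t : ℂ)) 1 x := by
      exact Complex.ofRealCLM.hasDerivAt (x := x)
    have base : HasDerivAt (fun t : ℝ => s * (t : ℂ) + (s * (c * Complex.I) - s * p))
        (s * 1) x := (hre.const_mul s).add_const _
    have h1 : HasDerivAt (fun t : ℝ => s * ((t : ℂ) + c * Complex.I - p)) s x := by
      have heq : (fun t : ℝ => s * ((t : ℂ) + c * Complex.I - p)) =
          fun t : ℝ => s * (t : ℂ) + (s * (c * Complex.I) - s * p) := by funext t; ring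
      rw [heq]; simpa using base
    have h2 := (Complex.hasDerivAt_log (hs x hx)).comp x h1
    convert h2 using 1
    · rfl
    · rfl
    rw [mul_inv, mul_comm s⁻¹, mul_assoc, inv_mul_cancel₀ hs0, mul_one]
  · apply ContinuousOn.intervalIntegrable
    apply ContinuousOn.inv₀
    · fun_prop
    · exact hne

theorem ilrl_vert_ftc (p : ℂ) (c A B : ℝ) (s : ℂ)
    (hs : ∀ y ∈ Set.uIcc A B, s * ((c : ℂ) + y * Complex.I - p) ∈ Complex.slitPlane) :
    ∫ y in A..B, ((c : ℂ) + y * Complex.I - p)⁻¹ =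
      -Complex.I * (Complex.log (s * ((c : ℂ) + B * Complex.I - p)) -
        Complex.log (s * ((c : ℂ) + A * Complex.I - p))) := by
  have hne : ∀ y ∈ Set.uIcc A B, ((c : ℂ) + y * Complex.I - p) ≠ 0 := by
    intro y hy h0
    have := Complex.slitPlane_ne_zero (hs y hy)
    simp [h0] at this
  have hs0 : s ≠ 0 := by
    have := Complex.slitPlane_ne_zero (hs A Set.left_mem_uIcc)
    intro h; simp [h] at this
  have key := intervalIntegral.integral_eq_sub_of_hasDerivAt
    (f := fun y : ℝ => -Complex.I * Complex.log (s * ((c : ℂ) + y * Complex.I - p)))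
    (f' := fun y : ℝ => ((c : ℂ) + y * Complex.I - p)⁻¹) (a := A) (b := B)
    (fun y hy => ?_) ?_
  · rw [key]; ring
  · have hre : HasDerivAt (fun t : ℝ => (t : ℂ)) 1 y := by
      exact Complex.ofRealCLM.hasDerivAt (x := y)
    have base : HasDerivAt (fun t : ℝ => s * ((t : ℂ) * Complex.I) + (s * c - s * p))
        (s * (1 * Complex.I)) y := ((hre.mul_const Complex.I).const_mul s).add_const _
    have h1 : HasDerivAt (fun t : ℝ => s * ((c : ℂ) + (t : ℂ) * Complex.I - p))
        (s * Complex.I) y := by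
      have heq : (fun t : ℝ => s * ((c : ℂ) + (t : ℂ) * Complex.I - p)) =
          fun t : ℝ => s * ((t : ℂ) * Complex.I) + (s * c - s * p) := by funext t; ring
      rw [heq]; simpa using base
    have h2 := ((Complex.hasDerivAt_log (hs y hy)).comp y h1).const_mul (-Complex.I)
    convert h2 using 1
    · rfl
    · rfl
    have hw := hne y hy
    rw [mul_inv]
    rw [show (-Complex.I) * (s⁻¹ * ((c : ℂ) + y * Complex.I - p)⁻¹ * (s * Complex.I)) =
      (s⁻¹ * s) * (-(Complex.I * Complex.I)) * ((c : ℂ) + y * Complex.I - p)⁻¹ from by ring,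
      inv_mul_cancel₀ hs0, Complex.I_mul_I]
    ring
  · apply ContinuousOn.intervalIntegrable
    apply ContinuousOn.inv₀
    · fun_prop
    · exact hne

lemma ilrl_normsq_sub_Ia (a : ℝ) (w : ℂ) :
    ‖w - Complex.I * a‖ ^ 2 = w.re ^ 2 + (w.im - a) ^ 2 := by
  rw [Complex.sq_norm, Complex.normSq_apply]
  simp
  ring

lemma ilrl_norm_le_norm_sub_Ia (a : ℝ) (ha : 0 ≤ a) (w : ℂ) (hw : w.im ≤ 0) :
    ‖w‖ ≤ ‖w - Complex.I * a‖ ∧ a ≤ ‖w - Complex.I * a‖ := by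
  have h1 := ilrl_normsq_sub_Ia a w
  have h2 : ‖w‖ ^ 2 = w.re ^ 2 + w.im ^ 2 := by
    rw [Complex.sq_norm, Complex.normSq_apply]; ring
  have hn1 : (0:ℝ) ≤ ‖w - Complex.I * a‖ := norm_nonneg _
  have hn2 : (0:ℝ) ≤ ‖w‖ := norm_nonneg _
  constructor
  · nlinarith
  · nlinarith

lemma ilrl_norm_q_le (a : ℝ) (ha : 2 < a) (w : ℂ) (hw : w.im ≤ 0) :
    ‖Complex.exp (-Complex.I * w) / (w - Complex.I * a)‖ ≤ ‖w - Complex.I * a‖⁻¹ := by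
  have hden : (0:ℝ) < ‖w - Complex.I * a‖ :=
    lt_of_lt_of_le (by linarith) (ilrl_norm_le_norm_sub_Ia a (by linarith) w hw).2
  rw [norm_div]
  have hexp : ‖Complex.exp (-Complex.I * w)‖ ≤ 1 := by
    rw [Complex.norm_exp]
    have : (-Complex.I * w).re = w.im := by simp
    rw [this]
    exact Real.exp_le_one_iff.mpr hw
  rw [div_le_iff₀ hden, inv_mul_cancel₀ (ne_of_gt hden)]
  exact hexp

lemma ilrl_slit_mem (a : ℝ) (ha : 2 < a) (w : ℂ) (hw : w.im ≤ 0) :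
    Complex.exp (-Complex.I * w) / (w - Complex.I * a) + 1 ∈ Complex.slitPlane := by
  set q := Complex.exp (-Complex.I * w) / (w - Complex.I * a) with hq
  have h2 : a ≤ ‖w - Complex.I * a‖ := (ilrl_norm_le_norm_sub_Ia a (by linarith) w hw).2
  have hqn : ‖q‖ ≤ a⁻¹ := by
    refine (ilrl_norm_q_le a ha w hw).trans ?_
    exact inv_anti₀ (by linarith) h2
  have hlt : ‖q‖ < 1 := lt_of_le_of_lt hqn (by rw [inv_lt_one_iff₀]; right; linarith)
  rw [Complex.mem_slitPlane_iff]
  left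
  have : -‖q‖ ≤ q.re := neg_abs_le q.re |>.trans' (by
    have := Complex.abs_re_le_norm q
    linarith [abs_le.mp (le_refl |q.re|)])
  simp only [Complex.add_re, Complex.one_re]
  have hre : -‖q‖ ≤ q.re := by
    have h := Complex.abs_re_le_norm q
    cases abs_le.mp h with
    | intro h1 h2 => exact h1
  linarith

lemma ilrl_norm_flog_le (a : ℝ) (ha : 2 < a) (w : ℂ) (hw : w.im ≤ 0) :
    ‖Complex.log (Complex.exp (-Complex.I * w) / (w - Complex.I * a) + 1)‖ ≤
      (3/2) * ‖w - Complex.I * a‖⁻¹ := by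
  set q := Complex.exp (-Complex.I * w) / (w - Complex.I * a) with hqdef
  have h2 : a ≤ ‖w - Complex.I * a‖ := (ilrl_norm_le_norm_sub_Ia a (by linarith) w hw).2
  have hqn : ‖q‖ ≤ ‖w - Complex.I * a‖⁻¹ := ilrl_norm_q_le a ha w hw
  have hhalf : ‖q‖ ≤ 1/2 := by
    refine hqn.trans ((inv_anti₀ two_pos (le_trans ha.le h2)).trans ?_)
    norm_num
  have := Complex.norm_log_one_add_half_le_self hhalf
  rw [add_comm q 1] at *
  calc ‖Complex.log (1 + q)‖ ≤ (3/2) * ‖q‖ := this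
    _ ≤ (3/2) * ‖w - Complex.I * a‖⁻¹ := by linarith

lemma ilrl_diff_flog (a : ℝ) (ha : 2 < a) (w : ℂ) (hw : w.im ≤ 0) :
    DifferentiableAt ℂ
      (fun u : ℂ => Complex.log (Complex.exp (-Complex.I * u) / (u - Complex.I * a) + 1)) w := by
  have hne : w - Complex.I * a ≠ 0 := by
    intro h
    have : (w - Complex.I * a).im = 0 := by rw [h]; simp
    simp at this
    linarith
  have hq : DifferentiableAt ℂ (fun u : ℂ => Complex.exp (-Complex.I * u) / (u - Complex.I * a)) w := by
    apply DifferentiableAt.div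
    · exact (differentiableAt_id.const_mul (-Complex.I)).cexp
    · exact differentiableAt_id.sub_const _
    · exact hne
  exact (hq.add_const 1).clog (ilrl_slit_mem a ha w hw)

lemma ilrl_integrable_g (a : ℝ) (ha : 2 < a) (z : ℂ) (hz : z.im < 0) :
    Integrable (fun t : ℝ =>
      Complex.log (Complex.exp (-Complex.I * t) / ((t : ℂ) - Complex.I * a) + 1) /
        ((t : ℂ) - z)) := by
  set b := -z.im with hb
  have hb0 : 0 < b := by simp [hb]; linarith
  set c := z.re with hc
  have hcont : Continuous (fun t : ℝ =>
      Complex.log (Complex.exp (-Complex.I * t) / ((t : ℂ) - Complex.I * a) + 1) /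
        ((t : ℂ) - z)) := by
    rw [continuous_iff_continuousAt]
    intro t
    apply ContinuousAt.div
    · exact ((ilrl_diff_flog a ha (t : ℂ) (by simp)).continuousAt).comp
        Complex.continuous_ofReal.continuousAt
    · fun_prop
    · intro h
      have : ((t : ℂ) - z).im = 0 := by rw [h]; simp
      simp at this
      linarith
  set C := (3/2) * (1 + b) * (1 + |c|) / b with hC
  refine (Integrable.const_mul integrable_inv_one_add_sq C).mono' hcont.aestronglyMeasurable
      (Filter.Eventually.of_forall fun t => ?_)
  set S := Real.sqrt (1 + t ^ 2) with hS
  have hS0 : 0 ≤ S := Real.sqrt_nonneg _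
  have hSsq : S ^ 2 = 1 + t ^ 2 := Real.sq_sqrt (by positivity)
  -- ‖t - I a‖ ≥ S
  have h1 : S ≤ ‖(t : ℂ) - Complex.I * a‖ := by
    have hsq : 1 + t ^ 2 ≤ ‖(t : ℂ) - Complex.I * a‖ ^ 2 := by
      rw [ilrl_normsq_sub_Ia a]
      simp only [Complex.ofReal_re, Complex.ofReal_im]
      nlinarith
    calc S ≤ Real.sqrt (‖(t : ℂ) - Complex.I * a‖ ^ 2) := Real.sqrt_le_sqrt hsq
      _ = ‖(t : ℂ) - Complex.I * a‖ := Real.sqrt_sq (norm_nonneg _)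
  set N := ‖(t : ℂ) - z‖ with hN
  have m1 : |t - c| ≤ N := by
    have := Complex.abs_re_le_norm ((t : ℂ) - z)
    simpa [hN] using this
  have m2 : b ≤ N := by
    have := Complex.abs_im_le_norm ((t : ℂ) - z)
    simp only [Complex.sub_im, Complex.ofReal_im, zero_sub, abs_neg] at this
    rw [abs_of_neg hz] at this
    simpa [hN, hb] using this
  have m3 : S ≤ 1 + |t| := by
    have hsq : 1 + t ^ 2 ≤ (1 + |t|) ^ 2 := by nlinarith [abs_nonneg t, _root_.sq_abs t]
    calc S ≤ Real.sqrt ((1 + |t|) ^ 2) := Real.sqrt_le_sqrt hsq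
      _ = 1 + |t| := Real.sqrt_sq (by positivity)
  have m4 : |t| ≤ |t - c| + |c| := by
    have := abs_add_le (t - c) c
    simpa using this
  -- b * S ≤ (1+b)*(1+|c|) * N
  have h2 : b * S ≤ (1 + b) * (1 + |c|) * N := by
    have step1 : b * (1 + |t - c|) ≤ (1 + b) * N := by nlinarith [abs_nonneg (t - c)]
    have step2 : S ≤ (1 + |c|) * (1 + |t - c|) := by nlinarith [abs_nonneg (t - c), abs_nonneg c]
    nlinarith [abs_nonneg c, abs_nonneg (t - c), mul_le_mul step2 step1 (by positivity) (by positivity)]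
  have hN0 : 0 < N := lt_of_lt_of_le hb0 m2
  have hIa0 : 0 < ‖(t : ℂ) - Complex.I * a‖ := lt_of_lt_of_le (by positivity) h1
  rw [norm_div, ← hN]
  have hflog := ilrl_norm_flog_le a ha (t : ℂ) (by simp)
  have goal2 : (3/2) * ‖(t : ℂ) - Complex.I * a‖⁻¹ / N ≤ C * (1 + t ^ 2)⁻¹ := by
    have lhs_eq : (3/2 : ℝ) * ‖(t : ℂ) - Complex.I * a‖⁻¹ / N =
        (3/2) / (‖(t : ℂ) - Complex.I * a‖ * N) := by ring
    have rhs_eq : C * (1 + t ^ 2)⁻¹ = C / (1 + t ^ 2) := by ring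
    rw [lhs_eq, rhs_eq, div_le_div_iff₀ (by positivity) (by positivity), hC]
    have rearr : (3:ℝ)/2*(1+b)*(1+|c|)/b*(‖(t : ℂ) - Complex.I * a‖ * N) =
        (3/2*(1+b)*(1+|c|)*(‖(t : ℂ) - Complex.I * a‖ * N))/b := by ring
    rw [rearr, le_div_iff₀ hb0]
    have key : b * S * S ≤ (1 + b) * (1 + |c|) * N * ‖(t : ℂ) - Complex.I * a‖ := by
      nlinarith [mul_le_mul h2 h1 hS0 (by positivity : (0:ℝ) ≤ (1 + b) * (1 + |c|) * N)]
    have hbs : b * S * S = b * (1 + t ^ 2) := by rw [← hSsq]; ring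
    calc 3 / 2 * (1 + t ^ 2) * b = (3/2) * (b * S * S) := by rw [hbs]; ring
      _ ≤ (3/2) * ((1 + b) * (1 + |c|) * N * ‖(t : ℂ) - Complex.I * a‖) :=
          mul_le_mul_of_nonneg_left key (by norm_num)
      _ = 3 / 2 * (1 + b) * (1 + |c|) * (‖(t : ℂ) - Complex.I * a‖ * N) := by ring
  calc ‖Complex.log (Complex.exp (-Complex.I * t) / ((t : ℂ) - Complex.I * a) + 1)‖ / N
      ≤ (3/2) * ‖(t : ℂ) - Complex.I * a‖⁻¹ / N := by
        gcongr
    _ ≤ C * (1 + t ^ 2)⁻¹ := goal2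
  -- fix norm of bound function form

lemma ilrl_key_bound (a : ℝ) (ha : 2 < a) (z : ℂ) (hz : z.im < 0) (n : ℝ)
    (hn : 2 * ‖z‖ + 2 ≤ n) :
    ‖(∫ x in (-n)..n,
        Complex.log (Complex.exp (-Complex.I * x) / ((x : ℂ) - Complex.I * a) + 1) /
          ((x : ℂ) - z)) +
      2 * π * Complex.I *
        Complex.log (Complex.exp (-Complex.I * z) / (z - Complex.I * a) + 1)‖ ≤ 12 / n := by
  set φ : ℂ → ℂ := fun u => Complex.log (Complex.exp (-Complex.I * u) / (u - Complex.I * a) + 1)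
    with hφ
  have hz0 : 0 < ‖z‖ := by
    rw [norm_pos_iff]
    intro h; rw [h] at hz; simp at hz
  have hn2 : 2 ≤ n := by linarith
  have hn0 : 0 < n := by linarith
  have hzn : ‖z‖ ≤ n / 2 - 1 := by linarith
  have hzre : |z.re| ≤ ‖z‖ := by
    have := Complex.abs_re_le_norm z; exact this
  have hzim : |z.im| ≤ ‖z‖ := by
    have := Complex.abs_im_le_norm z; exact this
  -- continuity of φ
  have hφc : ∀ w : ℂ, w.im ≤ 0 → ContinuousAt φ w := fun w hw =>
    (ilrl_diff_flog a ha w hw).continuousAt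
  -- z is interior-ish
  have hmzim : -n < z.im := by
    have := neg_abs_le z.im; linarith
  have hzrelt : -n < z.re ∧ z.re < n := by
    have := abs_le.mp hzre; constructor <;> linarith [this.1, this.2]
  -- Goursat for dslope
  have hG : DifferentiableOn ℂ (dslope φ z)
      (Set.uIcc (-n) n ×ℂ Set.uIcc (-n) (0:ℝ)) := by
    intro w hw
    rw [Complex.mem_reProdIm] at hw
    have him : w.im ≤ 0 := by
      have h2 := hw.2
      rw [Set.uIcc_of_le (by linarith : -n ≤ (0:ℝ))] at h2
      exact h2.2
    by_cases hwz : w = z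
    · subst hwz
      have hball : DifferentiableOn ℂ φ (Metric.ball w (-w.im)) := by
        intro u hu
        have him2 : |u.im - w.im| ≤ ‖u - w‖ := by
          simpa using Complex.abs_im_le_norm (u - w)
        have hui : u.im < 0 := by
          rw [Metric.mem_ball, dist_eq_norm] at hu
          have h5 := abs_lt.mp (lt_of_le_of_lt him2 hu)
          linarith [h5.2]
        exact (ilrl_diff_flog a ha u hui.le).differentiableWithinAt
      have hA : AnalyticAt ℂ φ w :=
        hball.analyticAt (Metric.isOpen_ball.mem_nhds (Metric.mem_ball_self (by linarith)))
      obtain ⟨p, hp⟩ := hA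
      exact (HasFPowerSeriesAt.analyticAt
        hp.has_fpower_series_dslope_fslope).differentiableAt.differentiableWithinAt
    · exact ((differentiableAt_dslope_of_ne hwz).mpr
        (ilrl_diff_flog a ha w him)).differentiableWithinAt
  have eq0 :
      (∫ x in (-n)..n, dslope φ z ((x : ℂ) + ((-n : ℝ) : ℂ) * Complex.I)) -
        (∫ x in (-n)..n, dslope φ z ((x : ℂ) + ((0 : ℝ) : ℂ) * Complex.I)) +
        Complex.I • (∫ y in (-n)..(0:ℝ), dslope φ z (((n : ℝ) : ℂ) + (y : ℂ) * Complex.I)) -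
        Complex.I • (∫ y in (-n)..(0:ℝ), dslope φ z (((-n : ℝ) : ℂ) + (y : ℂ) * Complex.I)) =
        0 := by
    exact Complex.integral_boundary_rect_eq_zero_of_differentiableOn (dslope φ z)
      (⟨-n, -n⟩ : ℂ) (⟨n, 0⟩ : ℂ) hG
  -- edge points differ from z
  have hbot_ne : ∀ x : ℝ, ((x : ℂ) + ((-n : ℝ) : ℂ) * Complex.I) ≠ z := by
    intro x h
    have : ((x : ℂ) + ((-n : ℝ) : ℂ) * Complex.I).im = z.im := congrArg Complex.im h
    simp at this
    linarith
  have htop_ne : ∀ x : ℝ, ((x : ℂ) + ((0 : ℝ) : ℂ) * Complex.I) ≠ z := by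
    intro x h
    have : ((x : ℂ) + ((0 : ℝ) : ℂ) * Complex.I).im = z.im := congrArg Complex.im h
    simp at this
    linarith
  have hr_ne : ∀ y : ℝ, (((n : ℝ) : ℂ) + (y : ℂ) * Complex.I) ≠ z := by
    intro y h
    have : (((n : ℝ) : ℂ) + (y : ℂ) * Complex.I).re = z.re := congrArg Complex.re h
    simp at this
    linarith [hzrelt.2]
  have hl_ne : ∀ y : ℝ, (((-n : ℝ) : ℂ) + (y : ℂ) * Complex.I) ≠ z := by
    intro y h
    have : (((-n : ℝ) : ℂ) + (y : ℂ) * Complex.I).re = z.re := congrArg Complex.re h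
    simp at this
    linarith [hzrelt.1]
  -- decomposition of dslope integrals, horizontal
  have decompH : ∀ c : ℝ, c ≤ 0 → (∀ x : ℝ, ((x : ℂ) + (c : ℂ) * Complex.I) ≠ z) →
      (∫ x in (-n)..n, dslope φ z ((x : ℂ) + (c : ℂ) * Complex.I)) =
        (∫ x in (-n)..n, φ ((x : ℂ) + (c : ℂ) * Complex.I) /
          (((x : ℂ) + (c : ℂ) * Complex.I) - z)) -
        φ z * ∫ x in (-n)..n, (((x : ℂ) + (c : ℂ) * Complex.I) - z)⁻¹ := by
    intro c hc hne
    have hsub : ∀ x : ℝ, ((x : ℂ) + (c : ℂ) * Complex.I) - z ≠ 0 := fun x =>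
      sub_ne_zero.mpr (hne x)
    have hcont : Continuous (fun x : ℝ => (x : ℂ) + (c : ℂ) * Complex.I) := by fun_prop
    have hφe : Continuous (fun x : ℝ => φ ((x : ℂ) + (c : ℂ) * Complex.I)) := by
      rw [continuous_iff_continuousAt]
      intro x
      exact (hφc _ (by simp [hc])).comp hcont.continuousAt
    have hint1 : IntervalIntegrable (fun x : ℝ => φ ((x : ℂ) + (c : ℂ) * Complex.I) /
        (((x : ℂ) + (c : ℂ) * Complex.I) - z)) volume (-n) n :=
      (hφe.div (by fun_prop) hsub).intervalIntegrable _ _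
    have hint2 : IntervalIntegrable (fun x : ℝ => (((x : ℂ) + (c : ℂ) * Complex.I) - z)⁻¹)
        volume (-n) n := ((hcont.sub continuous_const).inv₀ hsub).intervalIntegrable _ _
    rw [← intervalIntegral.integral_const_mul,
      ← intervalIntegral.integral_sub hint1 (hint2.const_mul (φ z))]
    apply intervalIntegral.integral_congr
    intro x _
    show dslope φ z ((x : ℂ) + (c : ℂ) * Complex.I) = _
    rw [dslope_of_ne _ (hne x), slope_def_field]
    have := hsub x
    field_simp
  -- decomposition, vertical
  have decompV : ∀ c : ℝ, (∀ y : ℝ, ((c : ℂ) + (y : ℂ) * Complex.I) ≠ z) →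
      (∫ y in (-n)..(0:ℝ), dslope φ z ((c : ℂ) + (y : ℂ) * Complex.I)) =
        (∫ y in (-n)..(0:ℝ), φ ((c : ℂ) + (y : ℂ) * Complex.I) /
          (((c : ℂ) + (y : ℂ) * Complex.I) - z)) -
        φ z * ∫ y in (-n)..(0:ℝ), (((c : ℂ) + (y : ℂ) * Complex.I) - z)⁻¹ := by
    intro c hne
    have hsub : ∀ y : ℝ, ((c : ℂ) + (y : ℂ) * Complex.I) - z ≠ 0 := fun y =>
      sub_ne_zero.mpr (hne y)
    have hcont : Continuous (fun y : ℝ => (c : ℂ) + (y : ℂ) * Complex.I) := by fun_prop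
    have hicc : Set.uIcc (-n) (0:ℝ) = Set.Icc (-n) 0 := Set.uIcc_of_le (by linarith)
    have hφe : ContinuousOn (fun y : ℝ => φ ((c : ℂ) + (y : ℂ) * Complex.I))
        (Set.uIcc (-n) (0:ℝ)) := by
      intro y hy
      rw [hicc] at hy
      exact ((hφc _ (by simp [hy.2])).comp hcont.continuousAt).continuousWithinAt
    have hint1 : IntervalIntegrable (fun y : ℝ => φ ((c : ℂ) + (y : ℂ) * Complex.I) /
        (((c : ℂ) + (y : ℂ) * Complex.I) - z)) volume (-n) 0 :=
      (hφe.div ((hcont.sub continuous_const).continuousOn) fun y _ => hsub y).intervalIntegrable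
    have hint2 : IntervalIntegrable (fun y : ℝ => (((c : ℂ) + (y : ℂ) * Complex.I) - z)⁻¹)
        volume (-n) 0 := ((hcont.sub continuous_const).inv₀ hsub).intervalIntegrable _ _
    rw [← intervalIntegral.integral_const_mul,
      ← intervalIntegral.integral_sub hint1 (hint2.const_mul (φ z))]
    apply intervalIntegral.integral_congr
    intro y _
    show dslope φ z ((c : ℂ) + (y : ℂ) * Complex.I) = _
    rw [dslope_of_ne _ (hne y), slope_def_field]
    have := hsub y
    field_simp
  -- FTC values of the inverse integrals
  have slit1 : ∀ x ∈ Set.uIcc (-n) n,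
      (1:ℂ) * ((x : ℂ) + ((-n : ℝ) : ℂ) * Complex.I - z) ∈ Complex.slitPlane := by
    intro x _
    rw [Complex.mem_slitPlane_iff]
    right
    simp
    linarith
  have slit2 : ∀ x ∈ Set.uIcc (-n) n,
      (1:ℂ) * ((x : ℂ) + ((0 : ℝ) : ℂ) * Complex.I - z) ∈ Complex.slitPlane := by
    intro x _
    rw [Complex.mem_slitPlane_iff]
    right
    simp
    linarith
  have slit3 : ∀ y ∈ Set.uIcc (-n) (0:ℝ),
      (1:ℂ) * (((n : ℝ) : ℂ) + (y : ℂ) * Complex.I - z) ∈ Complex.slitPlane := by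
    intro y _
    rw [Complex.mem_slitPlane_iff]
    left
    simp
    linarith [hzrelt.2]
  have slit4 : ∀ y ∈ Set.uIcc (-n) (0:ℝ),
      (-1:ℂ) * (((-n : ℝ) : ℂ) + (y : ℂ) * Complex.I - z) ∈ Complex.slitPlane := by
    intro y _
    rw [Complex.mem_slitPlane_iff]
    left
    simp
    linarith [hzrelt.1]
  have hBv := ilrl_horiz_ftc z (-n) (-n) n 1 slit1
  have hTv := ilrl_horiz_ftc z 0 (-n) n 1 slit2
  have hRv := ilrl_vert_ftc z n (-n) 0 1 slit3
  have hLv := ilrl_vert_ftc z (-n) (-n) 0 (-1) slit4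
  have harg4 : (1:ℂ) * (((-n : ℝ) : ℂ) + ((0:ℝ) : ℂ) * Complex.I - z) = -(z + (n : ℂ)) := by
    push_cast; ring
  have harg2 : (1:ℂ) * (((-n : ℝ) : ℂ) + ((-n : ℝ) : ℂ) * Complex.I - z) =
      -(z + (n : ℂ) + (n : ℂ) * Complex.I) := by push_cast; ring
  have harg5 : (-1:ℂ) * (((-n : ℝ) : ℂ) + ((0:ℝ) : ℂ) * Complex.I - z) = z + (n : ℂ) := by
    push_cast; ring
  have harg6 : (-1:ℂ) * (((-n : ℝ) : ℂ) + ((-n : ℝ) : ℂ) * Complex.I - z) =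
      z + (n : ℂ) + (n : ℂ) * Complex.I := by push_cast; ring
  have him1 : (z + (n : ℂ)).im < 0 := by simp [hz]
  have him2 : 0 < (z + (n : ℂ) + (n : ℂ) * Complex.I).im := by
    simp
    linarith
  rw [harg4, ilrl_log_neg_of_im_neg _ him1] at hTv
  rw [harg2, ilrl_log_neg_of_im_pos _ him2] at hBv
  rw [harg5, harg6] at hLv
  -- the main contour identity
  have main_eq : (∫ x in (-n)..n, φ ((x : ℂ) + ((0:ℝ) : ℂ) * Complex.I) /
        (((x : ℂ) + ((0:ℝ) : ℂ) * Complex.I) - z)) =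
      (∫ x in (-n)..n, φ ((x : ℂ) + ((-n : ℝ) : ℂ) * Complex.I) /
        (((x : ℂ) + ((-n : ℝ) : ℂ) * Complex.I) - z))
      + Complex.I * (∫ y in (-n)..(0:ℝ), φ (((n : ℝ) : ℂ) + (y : ℂ) * Complex.I) /
        ((((n : ℝ) : ℂ) + (y : ℂ) * Complex.I) - z))
      - Complex.I * (∫ y in (-n)..(0:ℝ), φ (((-n : ℝ) : ℂ) + (y : ℂ) * Complex.I) /
        ((((-n : ℝ) : ℂ) + (y : ℂ) * Complex.I) - z))
      - 2 * π * Complex.I * φ z := by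
    have e := eq0
    rw [decompH (-n) (by linarith) hbot_ne, decompH 0 le_rfl htop_ne,
      decompV n hr_ne, decompV (-n) hl_ne, hBv, hTv, hRv, hLv,
      smul_eq_mul, smul_eq_mul] at e
    linear_combination -e + φ z * (Complex.log (1 * (((n:ℝ) : ℂ) + ((0:ℝ) : ℂ) * Complex.I - z))
      - Complex.log (1 * (((n:ℝ) : ℂ) + ((-n : ℝ) : ℂ) * Complex.I - z))
      - Complex.log (z + (n : ℂ)) + Complex.log (z + (n : ℂ) + (n : ℂ) * Complex.I)) *
      Complex.I_sq
  -- pointwise edge bound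
  have edge_bd : ∀ w : ℂ, w.im ≤ 0 → n ≤ ‖w‖ → ‖φ w / (w - z)‖ ≤ 3 / n ^ 2 := by
    intro w hw hnw
    have h1 : n ≤ ‖w - Complex.I * a‖ :=
      le_trans hnw (ilrl_norm_le_norm_sub_Ia a (by linarith) w hw).1
    have hnum : ‖φ w‖ ≤ (3/2) * n⁻¹ :=
      (ilrl_norm_flog_le a ha w hw).trans
        (mul_le_mul_of_nonneg_left (inv_anti₀ hn0 h1) (by norm_num))
    have hden : n / 2 ≤ ‖w - z‖ := by
      have h2 : ‖w‖ - ‖z‖ ≤ ‖w - z‖ := norm_sub_norm_le w z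
      linarith
    rw [norm_div]
    calc ‖φ w‖ / ‖w - z‖ ≤ ((3/2) * n⁻¹) / (n / 2) :=
          div_le_div₀ (by positivity) hnum (by linarith) hden
      _ = 3 / n ^ 2 := by field_simp
  -- bottom edge bound
  have hBb : ‖∫ x in (-n)..n, φ ((x : ℂ) + ((-n : ℝ) : ℂ) * Complex.I) /
      (((x : ℂ) + ((-n : ℝ) : ℂ) * Complex.I) - z)‖ ≤ 6 / n := by
    have := intervalIntegral.norm_integral_le_of_norm_le_const
      (C := 3 / n ^ 2) (f := fun x : ℝ => φ ((x : ℂ) + ((-n : ℝ) : ℂ) * Complex.I) /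
        (((x : ℂ) + ((-n : ℝ) : ℂ) * Complex.I) - z)) (a := -n) (b := n) ?_
    · calc ‖∫ x in (-n)..n, φ ((x : ℂ) + ((-n : ℝ) : ℂ) * Complex.I) /
          (((x : ℂ) + ((-n : ℝ) : ℂ) * Complex.I) - z)‖ ≤ 3 / n ^ 2 * |n - (-n)| := this
        _ = 6 / n := by
            rw [abs_of_pos (by linarith : (0:ℝ) < n - (-n))]
            field_simp
            ring
    · intro x _
      apply edge_bd
      · simp
        linarith
      · have him := Complex.abs_im_le_norm ((x : ℂ) + ((-n : ℝ) : ℂ) * Complex.I)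
        have he : ((x : ℂ) + ((-n : ℝ) : ℂ) * Complex.I).im = -n := by simp
        rw [he, abs_neg, abs_of_pos hn0] at him
        exact him
  -- right edge bound
  have hRb : ‖∫ y in (-n)..(0:ℝ), φ (((n : ℝ) : ℂ) + (y : ℂ) * Complex.I) /
      ((((n : ℝ) : ℂ) + (y : ℂ) * Complex.I) - z)‖ ≤ 3 / n := by
    have := intervalIntegral.norm_integral_le_of_norm_le_const
      (C := 3 / n ^ 2) (f := fun y : ℝ => φ (((n : ℝ) : ℂ) + (y : ℂ) * Complex.I) /
        ((((n : ℝ) : ℂ) + (y : ℂ) * Complex.I) - z)) (a := -n) (b := 0) ?_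
    · calc ‖∫ y in (-n)..(0:ℝ), φ (((n : ℝ) : ℂ) + (y : ℂ) * Complex.I) /
          ((((n : ℝ) : ℂ) + (y : ℂ) * Complex.I) - z)‖ ≤ 3 / n ^ 2 * |0 - (-n)| := this
        _ = 3 / n := by
            rw [abs_of_pos (by linarith : (0:ℝ) < 0 - (-n))]
            field_simp
            ring
    · intro y hy
      rw [Set.uIoc_of_le (by linarith : -n ≤ (0:ℝ))] at hy
      apply edge_bd
      · simp
        linarith [hy.2]
      · have him := Complex.abs_re_le_norm (((n : ℝ) : ℂ) + (y : ℂ) * Complex.I)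
        have he : (((n : ℝ) : ℂ) + (y : ℂ) * Complex.I).re = n := by simp
        rw [he, abs_of_pos hn0] at him
        exact him
  -- left edge bound
  have hLb : ‖∫ y in (-n)..(0:ℝ), φ (((-n : ℝ) : ℂ) + (y : ℂ) * Complex.I) /
      ((((-n : ℝ) : ℂ) + (y : ℂ) * Complex.I) - z)‖ ≤ 3 / n := by
    have := intervalIntegral.norm_integral_le_of_norm_le_const
      (C := 3 / n ^ 2) (f := fun y : ℝ => φ (((-n : ℝ) : ℂ) + (y : ℂ) * Complex.I) /
        ((((-n : ℝ) : ℂ) + (y : ℂ) * Complex.I) - z)) (a := -n) (b := 0) ?_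
    · calc ‖∫ y in (-n)..(0:ℝ), φ (((-n : ℝ) : ℂ) + (y : ℂ) * Complex.I) /
          ((((-n : ℝ) : ℂ) + (y : ℂ) * Complex.I) - z)‖ ≤ 3 / n ^ 2 * |0 - (-n)| := this
        _ = 3 / n := by
            rw [abs_of_pos (by linarith : (0:ℝ) < 0 - (-n))]
            field_simp
            ring
    · intro y hy
      rw [Set.uIoc_of_le (by linarith : -n ≤ (0:ℝ))] at hy
      apply edge_bd
      · simp
        linarith [hy.2]
      · have him := Complex.abs_re_le_norm (((-n : ℝ) : ℂ) + (y : ℂ) * Complex.I)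
        have he : (((-n : ℝ) : ℂ) + (y : ℂ) * Complex.I).re = -n := by simp
        rw [he, abs_neg, abs_of_pos hn0] at him
        exact him
  -- conclude
  have hTeq : (∫ x in (-n)..n,
      Complex.log (Complex.exp (-Complex.I * x) / ((x : ℂ) - Complex.I * a) + 1) /
        ((x : ℂ) - z)) =
      ∫ x in (-n)..n, φ ((x : ℂ) + ((0:ℝ) : ℂ) * Complex.I) /
        (((x : ℂ) + ((0:ℝ) : ℂ) * Complex.I) - z) := by
    apply intervalIntegral.integral_congr
    intro x _
    simp [hφ, neg_mul]
  rw [hTeq, main_eq]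
  have hfinal : ∀ A B C D : ℂ, A + Complex.I * B - Complex.I * C - D + D =
      A + Complex.I * B - Complex.I * C := by intros; ring
  rw [hfinal]
  calc ‖(∫ x in (-n)..n, φ ((x : ℂ) + ((-n : ℝ) : ℂ) * Complex.I) /
        (((x : ℂ) + ((-n : ℝ) : ℂ) * Complex.I) - z))
      + Complex.I * (∫ y in (-n)..(0:ℝ), φ (((n : ℝ) : ℂ) + (y : ℂ) * Complex.I) /
        ((((n : ℝ) : ℂ) + (y : ℂ) * Complex.I) - z))
      - Complex.I * (∫ y in (-n)..(0:ℝ), φ (((-n : ℝ) : ℂ) + (y : ℂ) * Complex.I) /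
        ((((-n : ℝ) : ℂ) + (y : ℂ) * Complex.I) - z))‖
      ≤ ‖(∫ x in (-n)..n, φ ((x : ℂ) + ((-n : ℝ) : ℂ) * Complex.I) /
        (((x : ℂ) + ((-n : ℝ) : ℂ) * Complex.I) - z))
      + Complex.I * (∫ y in (-n)..(0:ℝ), φ (((n : ℝ) : ℂ) + (y : ℂ) * Complex.I) /
        ((((n : ℝ) : ℂ) + (y : ℂ) * Complex.I) - z))‖
      + ‖Complex.I * (∫ y in (-n)..(0:ℝ), φ (((-n : ℝ) : ℂ) + (y : ℂ) * Complex.I) /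
        ((((-n : ℝ) : ℂ) + (y : ℂ) * Complex.I) - z))‖ := norm_sub_le _ _
    _ ≤ ‖(∫ x in (-n)..n, φ ((x : ℂ) + ((-n : ℝ) : ℂ) * Complex.I) /
        (((x : ℂ) + ((-n : ℝ) : ℂ) * Complex.I) - z))‖
      + ‖Complex.I * (∫ y in (-n)..(0:ℝ), φ (((n : ℝ) : ℂ) + (y : ℂ) * Complex.I) /
        ((((n : ℝ) : ℂ) + (y : ℂ) * Complex.I) - z))‖
      + ‖Complex.I * (∫ y in (-n)..(0:ℝ), φ (((-n : ℝ) : ℂ) + (y : ℂ) * Complex.I) /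
        ((((-n : ℝ) : ℂ) + (y : ℂ) * Complex.I) - z))‖ :=
        add_le_add_left (norm_add_le _ _) _
    _ ≤ 6 / n + 3 / n + 3 / n := by
        rw [norm_mul, norm_mul, Complex.norm_I, one_mul, one_mul]
        exact add_le_add (add_le_add hBb hRb) hLb
    _ = 12 / n := by ring

/-- For `a > 2`, `R(t) = e^{−it}/(t − ia) + 1`, and `Im z < 0`, the function
`t ↦ Log(R t)/(t − z)` is integrable on `ℝ` and
`(1/(2πi)) ∫ Log(R t)/(t − z) dt = −Log(R z)`. -/
theorem integral_log_R_lower (a : ℝ) (ha : 2 < a) (z : ℂ) (hz : z.im < 0) :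
    Integrable (fun t : ℝ =>
      Complex.log (Complex.exp (-Complex.I * t) / ((t : ℂ) - Complex.I * a) + 1) /
        ((t : ℂ) - z)) ∧
    (1 / (2 * (π : ℂ) * Complex.I)) * (∫ t : ℝ,
      Complex.log (Complex.exp (-Complex.I * t) / ((t : ℂ) - Complex.I * a) + 1) /
        ((t : ℂ) - z)) =
      -Complex.log (Complex.exp (-Complex.I * z) / (z - Complex.I * a) + 1) := by
  have hInt := ilrl_integrable_g a ha z hz
  refine ⟨hInt, ?_⟩
  set g : ℝ → ℂ := fun t =>
    Complex.log (Complex.exp (-Complex.I * t) / ((t : ℂ) - Complex.I * a) + 1) /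
      ((t : ℂ) - z) with hg
  set c : ℂ := 2 * π * Complex.I *
    Complex.log (Complex.exp (-Complex.I * z) / (z - Complex.I * a) + 1) with hc
  have h1 : Filter.Tendsto (fun n : ℕ => ∫ x in (-(n:ℝ))..(n:ℝ), g x) Filter.atTop
      (nhds (∫ t, g t)) := by
    apply MeasureTheory.intervalIntegral_tendsto_integral hInt
    · exact Filter.tendsto_neg_atTop_atBot.comp tendsto_natCast_atTop_atTop
    · exact tendsto_natCast_atTop_atTop
  have h2 : Filter.Tendsto (fun n : ℕ => (∫ x in (-(n:ℝ))..(n:ℝ), g x) + c) Filter.atTop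
      (nhds 0) := by
    have hev : ∀ᶠ n : ℕ in Filter.atTop,
        ‖(∫ x in (-(n:ℝ))..(n:ℝ), g x) + c‖ ≤ 12 / (n : ℝ) := by
      rw [Filter.eventually_atTop]
      refine ⟨⌈2 * ‖z‖ + 2⌉₊, fun n hn => ?_⟩
      exact ilrl_key_bound a ha z hz (n : ℝ) ((Nat.ceil_le.mp hn))
    exact squeeze_zero_norm' hev (tendsto_const_div_atTop_nhds_zero_nat 12)
  have h3 : Filter.Tendsto (fun n : ℕ => ∫ x in (-(n:ℝ))..(n:ℝ), g x) Filter.atTop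
      (nhds (0 - c)) := by
    have := h2.sub_const c
    simpa using this
  have hval : (∫ t, g t) = -c := by
    have := tendsto_nhds_unique h1 h3
    rw [this]; ring
  rw [hval, hc]
  have hπ : (π : ℂ) ≠ 0 := Complex.ofReal_ne_zero.mpr Real.pi_ne_zero
  field_simp
end
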